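/- Assume D_x ≥ 1. Then for every i ∈ ℕ and every monomial μ^α x^β occurring in L^i(f) (the i-th iterate of L applied to f), the following inequalities hold: |α| ≤ d_μ + i·D_μ and |β| + i ≤ d_x + i·D_x (i.e., |β| ≤ d_x + i·(D_x − 1)). -/

import Mathlib

open MvPolynomial

/-- Total degree of `p` with respect to the `μ`-variables (indexed by `Sum.inl`). -/
noncomputable def degMu {K : Type*} [CommSemiring K] {r n : ℕ}
    (p : MvPolynomial (Fin r ⊕ Fin n) K) : ℕ :=
  p.support.sup fun m => ∑ j : Fin r, m (Sum.inl j)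

/-- Total degree of `p` with respect to the `x`-variables (indexed by `Sum.inr`). -/
noncomputable def degXv {K : Type*} [CommSemiring K] {r n : ℕ}
    (p : MvPolynomial (Fin r ⊕ Fin n) K) : ℕ :=
  p.support.sup fun m => ∑ i : Fin n, m (Sum.inr i)

section
variable {K : Type*} [Field K] [CharZero K] {r n : ℕ}

local notation "R" => MvPolynomial (Fin r ⊕ Fin n) K

lemma wmu_add (a b : (Fin r ⊕ Fin n) →₀ ℕ) :
    (∑ j : Fin r, (a + b) (Sum.inl j))
      = (∑ j : Fin r, a (Sum.inl j)) + ∑ j : Fin r, b (Sum.inl j) := by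
  simp [Finsupp.add_apply, Finset.sum_add_distrib]

lemma wx_add (a b : (Fin r ⊕ Fin n) →₀ ℕ) :
    (∑ j : Fin n, (a + b) (Sum.inr j))
      = (∑ j : Fin n, a (Sum.inr j)) + ∑ j : Fin n, b (Sum.inr j) := by
  simp [Finsupp.add_apply, Finset.sum_add_distrib]

lemma wmu_single_inr (i : Fin n) (b : ℕ) :
    (∑ j : Fin r, (Finsupp.single (Sum.inr i : Fin r ⊕ Fin n) b) (Sum.inl j)) = 0 := by
  simp [Finsupp.single_apply]

lemma wx_single_inr (i : Fin n) (b : ℕ) :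
    (∑ j : Fin n, (Finsupp.single (Sum.inr i : Fin r ⊕ Fin n) b) (Sum.inr j)) = b := by
  simp [Finsupp.single_apply]

lemma keyB (g : Fin n → R)
    (L : Derivation ℚ R R)
    (hLx : ∀ i, L (X (Sum.inr i)) = g i)
    (hLmu : ∀ j, L (X (Sum.inl j)) = 0)
    (Dmu Dx : ℕ)
    (hgmu : ∀ i, ∀ m ∈ (g i).support, (∑ j : Fin r, m (Sum.inl j)) ≤ Dmu)
    (hgx : ∀ i, ∀ m ∈ (g i).support, (∑ j : Fin n, m (Sum.inr j)) ≤ Dx)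
    (m : (Fin r ⊕ Fin n) →₀ ℕ) :
    ∀ m' ∈ (L (monomial m (1:K))).support,
      (∑ j : Fin r, m' (Sum.inl j)) ≤ (∑ j : Fin r, m (Sum.inl j)) + Dmu ∧
      (∑ j : Fin n, m' (Sum.inr j)) + 1 ≤ (∑ j : Fin n, m (Sum.inr j)) + Dx := by
  classical
  induction m using Finsupp.induction with
  | zero =>
      intro m' hm'
      simp only [monomial_zero', C_1, map_one, Derivation.map_one_eq_zero] at hm'
      simp at hm'
  | single_add v b m0 hv hb ih =>
      intro m' hm'
      have hsplit : (monomial (Finsupp.single v b + m0) (1:K) : R)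
          = X v ^ b * monomial m0 1 := by
        rw [X_pow_eq_monomial, monomial_mul, one_mul]
      rw [hsplit, Derivation.leibniz, Derivation.leibniz_pow] at hm'
      have hm'' := MvPolynomial.support_add hm'
      rw [Finset.mem_union] at hm''
      rcases hm'' with h1 | h1
      · -- X v ^ b • L (monomial m0 1)
        rw [smul_eq_mul] at h1
        have h2 := MvPolynomial.support_mul _ _ h1
        rw [Finset.mem_add] at h2
        obtain ⟨a, ha, c, hc, rfl⟩ := h2
        rw [X_pow_eq_monomial, support_monomial, if_neg one_ne_zero, Finset.mem_singleton] at ha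
        subst ha
        obtain ⟨hμ, hx⟩ := ih _ hc
        constructor
        · rw [wmu_add, wmu_add]
          omega
        · rw [wx_add, wx_add]
          omega
      · -- monomial m0 1 • (b • X v ^ (b-1) • L (X v))
        rcases v with j | i
        · rw [hLmu] at h1
          simp at h1
        · rw [hLx] at h1
          rw [smul_eq_mul, smul_eq_mul] at h1
          have h2 := MvPolynomial.support_mul _ _ h1
          rw [Finset.mem_add] at h2
          obtain ⟨a, ha, c, hc, rfl⟩ := h2
          rw [support_monomial, if_neg one_ne_zero, Finset.mem_singleton] at ha
          subst ha
          have hc' := MvPolynomial.support_smul hc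
          have h3 := MvPolynomial.support_mul _ _ hc'
          rw [Finset.mem_add] at h3
          obtain ⟨a2, ha2, c2, hc2, rfl⟩ := h3
          rw [X_pow_eq_monomial, support_monomial, if_neg one_ne_zero,
            Finset.mem_singleton] at ha2
          subst ha2
          have hμ3 := hgmu i _ hc2
          have hx3 := hgx i _ hc2
          constructor
          · rw [wmu_add, wmu_add, wmu_add, wmu_single_inr, wmu_single_inr]
            omega
          · rw [wx_add, wx_add, wx_add, wx_single_inr, wx_single_inr]
            omega

end

section
variable {K : Type*} [Field K] [CharZero K] {r n : ℕ}
local notation "R" => MvPolynomial (Fin r ⊕ Fin n) K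

lemma keyC (g : Fin n → R)
    (L : Derivation ℚ R R)
    (hLx : ∀ i, L (X (Sum.inr i)) = g i)
    (hLmu : ∀ j, L (X (Sum.inl j)) = 0)
    (hLC : ∀ c : K, ∃ c' : K, L (C c) = C c')
    (Dmu Dx : ℕ) (hDx1 : 1 ≤ Dx)
    (hgmu : ∀ i, ∀ m ∈ (g i).support, (∑ j : Fin r, m (Sum.inl j)) ≤ Dmu)
    (hgx : ∀ i, ∀ m ∈ (g i).support, (∑ j : Fin n, m (Sum.inr j)) ≤ Dx)
    (p : R) :
    ∀ m' ∈ (L p).support, ∃ m ∈ p.support,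
      (∑ j : Fin r, m' (Sum.inl j)) ≤ (∑ j : Fin r, m (Sum.inl j)) + Dmu ∧
      (∑ j : Fin n, m' (Sum.inr j)) + 1 ≤ (∑ j : Fin n, m (Sum.inr j)) + Dx := by
  classical
  intro m' hm'
  have hrw : L p = ∑ m ∈ p.support, L (monomial m (coeff m p)) := by
    conv_lhs => rw [p.as_sum]
    rw [map_sum]
  rw [hrw] at hm'
  have h := MvPolynomial.support_sum hm'
  rw [Finset.mem_biUnion] at h
  obtain ⟨m, hmp, hm⟩ := h
  refine ⟨m, hmp, ?_⟩
  -- L (monomial m c) = C c • L (monomial m 1) + monomial m 1 • L (C c)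
  have hmono : (monomial m (coeff m p) : R) = C (coeff m p) * monomial m 1 := by
    rw [C_mul_monomial, mul_one]
  rw [hmono, Derivation.leibniz] at hm
  have h1 := MvPolynomial.support_add hm
  rw [Finset.mem_union] at h1
  rcases h1 with h1 | h1
  · rw [smul_eq_mul] at h1
    have h2 := MvPolynomial.support_mul _ _ h1
    rw [Finset.mem_add] at h2
    obtain ⟨a, ha, c, hc, rfl⟩ := h2
    have ha0 : a = 0 := by
      rw [C_apply] at ha
      have := MvPolynomial.support_monomial_subset ha
      simpa using this
    subst ha0
    rw [zero_add]
    exact keyB g L hLx hLmu Dmu Dx hgmu hgx m _ hc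
  · rw [smul_eq_mul] at h1
    obtain ⟨c', hc'⟩ := hLC (coeff m p)
    rw [hc'] at h1
    have : (monomial m 1 : R) * C c' = monomial m c' := by
      rw [mul_comm, C_mul_monomial, mul_one]
    rw [this] at h1
    have : m' = m := by
      have := MvPolynomial.support_monomial_subset h1
      simpa using this
    subst this
    omega

end

theorem stmt8 {K : Type*} [Field K] [CharZero K] {r n : ℕ} (hn : 1 ≤ n)
    (g : Fin n → MvPolynomial (Fin r ⊕ Fin n) K) (f : MvPolynomial (Fin r ⊕ Fin n) K)
    (L : Derivation ℚ (MvPolynomial (Fin r ⊕ Fin n) K) (MvPolynomial (Fin r ⊕ Fin n) K))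
    (hLx : ∀ i, L (X (Sum.inr i)) = g i)
    (hLmu : ∀ j, L (X (Sum.inl j)) = 0)
    (hLC : ∀ c : K, ∃ c' : K, L (C c) = C c')
    (dmu dx Dmu Dx : ℕ)
    (hdmu : dmu = degMu f) (hdx : dx = degXv f)
    (hDmu : Dmu = Finset.univ.sup fun i => degMu (g i))
    (hDx : Dx = Finset.univ.sup fun i => degXv (g i))
    (hDx1 : 1 ≤ Dx) :
    ∀ (i : ℕ), ∀ m ∈ ((⇑L)^[i] f).support,
      (∑ j : Fin r, m (Sum.inl j)) ≤ dmu + i * Dmu ∧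
        (∑ j : Fin n, m (Sum.inr j)) + i ≤ dx + i * Dx := by
  have hgmu : ∀ i, ∀ m ∈ (g i).support, (∑ j : Fin r, m (Sum.inl j)) ≤ Dmu := by
    intro i m hm
    have h1 : (∑ j : Fin r, m (Sum.inl j)) ≤ degMu (g i) := by
      unfold degMu; exact Finset.le_sup (f := fun m => ∑ j : Fin r, m (Sum.inl j)) hm
    have h2 : degMu (g i) ≤ Dmu := by
      rw [hDmu]; exact Finset.le_sup (f := fun i => degMu (g i)) (Finset.mem_univ i)
    omega
  have hgx : ∀ i, ∀ m ∈ (g i).support, (∑ j : Fin n, m (Sum.inr j)) ≤ Dx := by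
    intro i m hm
    have h1 : (∑ j : Fin n, m (Sum.inr j)) ≤ degXv (g i) := by
      unfold degXv; exact Finset.le_sup (f := fun m => ∑ i : Fin n, m (Sum.inr i)) hm
    have h2 : degXv (g i) ≤ Dx := by
      rw [hDx]; exact Finset.le_sup (f := fun i => degXv (g i)) (Finset.mem_univ i)
    omega
  intro i
  induction i with
  | zero =>
      intro m hm
      simp only [Function.iterate_zero, id_eq] at hm
      refine ⟨?_, ?_⟩
      · have : (∑ j : Fin r, m (Sum.inl j)) ≤ dmu := by
          rw [hdmu]; unfold degMu; exact Finset.le_sup (f := fun m => ∑ j : Fin r, m (Sum.inl j)) hm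
        simpa using this
      · have : (∑ j : Fin n, m (Sum.inr j)) ≤ dx := by
          rw [hdx]; unfold degXv; exact Finset.le_sup (f := fun m => ∑ i : Fin n, m (Sum.inr i)) hm
        simpa using this
  | succ i ih =>
      intro m hm
      rw [Function.iterate_succ_apply'] at hm
      obtain ⟨m0, hm0, hμ, hx⟩ :=
        keyC g L hLx hLmu hLC Dmu Dx hDx1 hgmu hgx _ m hm
      obtain ⟨ihμ, ihx⟩ := ih m0 hm0
      constructor
      · calc (∑ j : Fin r, m (Sum.inl j)) ≤ (∑ j : Fin r, m0 (Sum.inl j)) + Dmu := hμ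
          _ ≤ dmu + i * Dmu + Dmu := by omega
          _ = dmu + (i + 1) * Dmu := by ring
      · have : (∑ j : Fin n, m (Sum.inr j)) + (i+1) ≤ dx + i * Dx + Dx := by omega
        calc (∑ j : Fin n, m (Sum.inr j)) + (i+1) ≤ dx + i * Dx + Dx := this
          _ = dx + (i + 1) * Dx := by ring
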